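/- arXiv:2412.04250 — 2 statements merged into one kernel-verified Lean document; each statement's English description precedes it below -/
import Mathlib

section
/- Let G = G₁ * ⋯ * Gₙ be a free product with distinct indices i, j, and let x ∈ Gᵢ, y ∈ Gⱼ. Let A, B ⊆ {1,...,n} \ {i, j} be disjoint. Then the Whitehead automorphisms (A, x) and (B, y) commute in Aut(G). -/
/-- `H : ι → Subgroup G` is an (internal) free product decomposition of `G`:
the canonical map from the external free product of the `H i` to `G` is bijective. -/
def IsFreeProductOf {ι : Type*} {G : Type*} [Group G] (H : ι → Subgroup G) : Prop :=
  Function.Bijective (Monoid.CoprodI.lift fun i => (H i).subtype)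


/-- `ψ` is the Whitehead automorphism `(A, x)`: it conjugates each factor `H j` with
`j ∈ A` pointwise by `x` (i.e. `g ↦ x⁻¹ g x`), and fixes every other factor pointwise. -/
def IsWhitehead {ι : Type*} {G : Type*} [Group G] (H : ι → Subgroup G)
    (A : Set ι) (x : G) (ψ : MulAut G) : Prop :=
  (∀ j ∈ A, ∀ g ∈ H j, ψ g = x⁻¹ * g * x) ∧ ∀ j ∉ A, ∀ g ∈ H j, ψ g = g

/-- Whitehead automorphisms `(A, x)` and `(B, y)` with `x ∈ Gᵢ`, `y ∈ Gⱼ`,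
`i ≠ j`, and disjoint `A, B ⊆ {1,…,n} \ {i,j}` commute in `Aut(G)`. -/
theorem stmt_10 {n : ℕ} {G : Type*} [Group G] (H : Fin n → Subgroup G)
    (hfp : IsFreeProductOf H) (i j : Fin n) (hij : i ≠ j)
    (x y : G) (hx : x ∈ H i) (hy : y ∈ H j)
    (A B : Set (Fin n)) (hA : A ⊆ ({i, j} : Set (Fin n))ᶜ)
    (hB : B ⊆ ({i, j} : Set (Fin n))ᶜ) (hdisj : Disjoint A B)
    (ψ φ : MulAut G) (hψ : IsWhitehead H A x ψ) (hφ : IsWhitehead H B y φ) :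
    ψ * φ = φ * ψ := by
  have hiA : i ∉ A := fun h => hA h (Or.inl rfl)
  have hjA : j ∉ A := fun h => hA h (Or.inr rfl)
  have hiB : i ∉ B := fun h => hB h (Or.inl rfl)
  have hjB : j ∉ B := fun h => hB h (Or.inr rfl)
  have hψx : ψ x = x := hψ.2 i hiA x hx
  have hφx : φ x = x := hφ.2 i hiB x hx
  have hψy : ψ y = y := hψ.2 j hjA y hy
  have key : ∀ k, ∀ g ∈ H k, ψ (φ g) = φ (ψ g) := by
    intro k g hg
    by_cases hkA : k ∈ A
    · have hkB : k ∉ B := fun h => (hdisj.le_bot ⟨hkA, h⟩)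
      rw [hφ.2 k hkB g hg, hψ.1 k hkA g hg, map_mul, map_mul, map_inv, hφx,
        hφ.2 k hkB g hg]
    · by_cases hkB : k ∈ B
      · rw [hφ.1 k hkB g hg, hψ.2 k hkA g hg, map_mul, map_mul, map_inv, hψy,
          hψ.2 k hkA g hg, hφ.1 k hkB g hg]
      · rw [hφ.2 k hkB g hg, hψ.2 k hkA g hg, hφ.2 k hkB g hg]
  have main : ∀ g : G, ψ (φ g) = φ (ψ g) := by
    intro g
    obtain ⟨w, rfl⟩ := hfp.2 g
    induction w using Monoid.CoprodI.induction_on with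
    | one => simp
    | of k m => simpa using key k m m.2
    | mul a b ha hb => simp only [map_mul, ha, hb]
  ext g
  exact main g
end

section
/- Let G = G₁ * ⋯ * Gₙ be a free product with distinct indices i, j, k, and let x ∈ Gᵢ. Let ψ be the Whitehead automorphism conjugating both Gⱼ and Gₖ pointwise by x (and fixing every other factor pointwise), i.e. ψ = ({Gⱼ, Gₖ}, x). Then for any y ∈ Gⱼ, ψ commutes in Aut(G) with the Whitehead automorphism ({Gₖ}, y) conjugating Gₖ pointwise by y. -/
/-- the Whitehead automorphism `({Gⱼ, Gₖ}, x)` with `x ∈ Gᵢ` commutes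
with the Whitehead automorphism `({Gₖ}, y)` with `y ∈ Gⱼ`, for distinct `i, j, k`. -/
theorem stmt_15 {n : ℕ} {G : Type*} [Group G] (H : Fin n → Subgroup G)
    (hfp : IsFreeProductOf H) (i j k : Fin n)
    (hij : i ≠ j) (hik : i ≠ k) (hjk : j ≠ k)
    (x y : G) (hx : x ∈ H i) (hy : y ∈ H j)
    (ψ φ : MulAut G)
    (hψ : IsWhitehead H {j, k} x ψ) (hφ : IsWhitehead H {k} y φ) :
    ψ * φ = φ * ψ := by
  obtain ⟨hψ1, hψ2⟩ := hψ
  obtain ⟨hφ1, hφ2⟩ := hφ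
  -- basic facts
  have hψx : ψ x = x := hψ2 i (by simp [hij, hik]) x hx
  have hφx : φ x = x := hφ2 i (by simp [hik]) x hx
  have hφy : φ y = y := hφ2 j (by simp [hjk]) y hy
  have hψy : ψ y = x⁻¹ * y * x := hψ1 j (by simp) y hy
  -- the key claim on generators
  have key : ∀ g : G, (∃ l, g ∈ H l) → ψ (φ g) = φ (ψ g) := by
    rintro g ⟨l, hg⟩
    by_cases hlk : l = k
    · subst hlk
      have h1 : φ g = y⁻¹ * g * y := hφ1 l rfl g hg
      have h2 : ψ g = x⁻¹ * g * x := hψ1 l (by simp) g hg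
      rw [h1, h2]
      simp only [map_mul, map_inv, hψy, h2, hφx, hφy,
        hφ1 l rfl g hg]
      group
    · have h1 : φ g = g := hφ2 l (by simp [hlk]) g hg
      by_cases hlj : l = j
      · subst hlj
        have h2 : ψ g = x⁻¹ * g * x := hψ1 l (by simp) g hg
        rw [h1, h2]
        simp only [map_mul, map_inv, hφx, hφ2 l (by simp [hjk]) g hg]
      · have h2 : ψ g = g := hψ2 l (by simp [hlj, hlk]) g hg
        rw [h1, h2, h1]
  -- every element is in the closure of the union of factors
  have htop : ∀ g : G, g ∈ Subgroup.closure (⋃ l, (H l : Set G)) := by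
    intro g
    obtain ⟨w, rfl⟩ := hfp.2 g
    induction w using Monoid.CoprodI.induction_on with
    | one => rw [map_one]; exact Subgroup.one_mem _
    | of l m =>
        exact Subgroup.subset_closure (Set.mem_iUnion.2 ⟨l, by simp⟩)
    | mul a b ha hb => rw [map_mul]; exact Subgroup.mul_mem _ ha hb
  ext g
  show ψ (φ g) = φ (ψ g)
  refine Subgroup.closure_induction ?_ (by simp) ?_ ?_ (htop g)
  · intro g hg
    obtain ⟨_, ⟨l, rfl⟩, hg⟩ := hg
    exact key g ⟨l, hg⟩
  · intro a b _ _ ha hb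
    simp [map_mul, ha, hb]
  · intro a _ ha
    simp only [map_inv, ha]
end
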